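/- For any α ∈ (0,1) and all ξ ∈ ℝ, the Fourier transform of φ'_α is given by 𝓕(φ'_α)(ξ) = (√π / Γ((α+2)/2)) · ∫_0^∞ e^{-s} s^{(α-1)/2} e^{-π²ξ²/s} ds. -/

import Mathlib

open MeasureTheory Filter Real
open scoped ENNReal

noncomputable section

lemma aux_integrableOn {s r : ℝ} (hs : 0 < s) (hr : 1 ≤ r) :
    IntegrableOn (fun t : ℝ => t ^ (s - 1) * Real.exp (-(r * t))) (Set.Ioi 0) := by
  apply Integrable.mono' (Real.GammaIntegral_convergent hs)
  · apply Measurable.aestronglyMeasurable; fun_prop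
  · filter_upwards [ae_restrict_mem measurableSet_Ioi] with t ht
    rw [Real.norm_eq_abs,
      abs_of_nonneg (mul_nonneg (Real.rpow_nonneg (le_of_lt ht) _) (Real.exp_nonneg _)),
      mul_comm (Real.exp (-t))]
    gcongr
    · exact Real.rpow_nonneg (le_of_lt ht) _
    · nlinarith [le_of_lt (Set.mem_Ioi.mp ht)]

/-- Fourier transform of a real-valued function on ℝ, as a complex-valued function:
`𝓕f(ξ) = ∫ e^{-2πixξ} f(x) dx`. -/
def FT (f : ℝ → ℝ) : ℝ → ℂ :=
  VectorFourier.fourierIntegral Real.fourierChar volume (innerₗ ℝ) (fun x => (f x : ℂ))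

theorem fourier_transform_phi_alpha
    (α : ℝ) (hα : α ∈ Set.Ioo (0 : ℝ) 1) (ξ : ℝ) :
    FT (fun x => (1 + x ^ 2) ^ (-(α + 2) / 2)) ξ =
      ((Real.sqrt π / Real.Gamma ((α + 2) / 2)) *
        ∫ s in Set.Ioi (0 : ℝ),
          Real.exp (-s) * s ^ ((α - 1) / 2) * Real.exp (-(π ^ 2 * ξ ^ 2) / s) : ℝ) := by
  obtain ⟨hα0, hα1⟩ := hα
  set s : ℝ := (α + 2) / 2 with hs_def
  have hs1 : (1 : ℝ) < s := by rw [hs_def]; linarith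
  have hs0 : (0 : ℝ) < s := by linarith
  have hΓ : 0 < Real.Gamma s := Real.Gamma_pos_of_pos hs0
  -- pointwise Gamma representation
  have key : ∀ x : ℝ, ((1 + x ^ 2) ^ (-(α + 2) / 2) : ℝ)
      = (Real.Gamma s)⁻¹ *
        ∫ t in Set.Ioi (0 : ℝ), t ^ (s - 1) * Real.exp (-((1 + x ^ 2) * t)) := by
    intro x
    have hx : (0 : ℝ) < 1 + x ^ 2 := by positivity
    rw [integral_rpow_mul_exp_neg_mul_Ioi hs0 hx, one_div, Real.inv_rpow hx.le,
      ← Real.rpow_neg hx.le]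
    rw [show -(α + 2) / 2 = -s by rw [hs_def]; ring]
    field_simp
  -- the double-integral integrand
  set G : ℝ → ℝ → ℂ := fun x t =>
    Complex.exp (↑(-2 * π * x * ξ) * Complex.I) *
      ((t ^ (s - 1) * Real.exp (-((1 + x ^ 2) * t)) : ℝ) : ℂ) with hG_def
  have hGnorm : ∀ x : ℝ, ∀ t ∈ Set.Ioi (0:ℝ),
      ‖G x t‖ = t ^ (s - 1) * Real.exp (-((1 + x ^ 2) * t)) := by
    intro x t ht
    simp only [hG_def]
    rw [norm_mul, Complex.norm_exp_ofReal_mul_I, one_mul, Complex.norm_real, Real.norm_eq_abs,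
      abs_of_nonneg (mul_nonneg (Real.rpow_nonneg (le_of_lt ht) _) (Real.exp_nonneg _))]
  have hsect : ∀ x : ℝ, Integrable (G x) (volume.restrict (Set.Ioi 0)) := by
    intro x
    have hx1 : (1 : ℝ) ≤ 1 + x ^ 2 := by nlinarith [sq_nonneg x]
    have h0 := aux_integrableOn hs0 hx1
    apply Integrable.mono' ((h0.norm))
    · apply Measurable.aestronglyMeasurable
      apply Measurable.mul (by fun_prop)
      fun_prop
    · filter_upwards [ae_restrict_mem measurableSet_Ioi] with t ht
      rw [hGnorm x t ht, Real.norm_eq_abs]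
      exact le_abs_self _
  -- integrability of the double integrand
  have hG : Integrable (Function.uncurry G)
      (volume.prod (volume.restrict (Set.Ioi 0))) := by
    rw [MeasureTheory.integrable_prod_iff]
    · refine ⟨Filter.Eventually.of_forall hsect, ?_⟩
      have heq : (fun x : ℝ => ∫ t in Set.Ioi (0:ℝ), ‖G x t‖)
          = fun x : ℝ => (1 / (1 + x ^ 2)) ^ s * Real.Gamma s := by
        funext x
        have hx : (0 : ℝ) < 1 + x ^ 2 := by positivity
        rw [← integral_rpow_mul_exp_neg_mul_Ioi hs0 hx]
        exact setIntegral_congr_fun measurableSet_Ioi (fun t ht => hGnorm x t ht)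
      simp only [Function.uncurry_apply_pair]
      rw [heq]
      apply Integrable.mono' (integrable_inv_one_add_sq.const_mul (Real.Gamma s))
      · apply Continuous.aestronglyMeasurable
        have hc : Continuous fun x : ℝ => 1 / (1 + x ^ 2) := by
          apply Continuous.div continuous_const (by continuity)
          intro x; positivity
        exact (hc.rpow_const (fun x => Or.inr hs0.le)).mul continuous_const
      · refine Filter.Eventually.of_forall fun x => ?_
        have hx : (0 : ℝ) < 1 + x ^ 2 := by positivity
        have h1 : (0:ℝ) < 1 / (1 + x ^ 2) := by positivity
        have h2 : 1 / (1 + x ^ 2) ≤ (1:ℝ) := by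
          rw [div_le_one hx]; nlinarith [sq_nonneg x]
        rw [Real.norm_eq_abs, abs_of_nonneg (by positivity)]
        calc (1 / (1 + x ^ 2)) ^ s * Real.Gamma s
            ≤ (1 / (1 + x ^ 2)) ^ (1:ℝ) * Real.Gamma s :=
              mul_le_mul_of_nonneg_right
                (Real.rpow_le_rpow_of_exponent_ge h1 h2 hs1.le) hΓ.le
          _ = Real.Gamma s * (1 + x ^ 2)⁻¹ := by
              rw [Real.rpow_one, one_div, mul_comm]
    · apply Measurable.aestronglyMeasurable
      apply Measurable.mul
      · fun_prop
      · apply Complex.measurable_ofReal.comp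
        apply Measurable.mul (by fun_prop) (by fun_prop)
  -- rewrite LHS as a double integral and swap
  change FourierTransform.fourier (fun x : ℝ => (((1 + x ^ 2) ^ (-(α + 2) / 2) : ℝ) : ℂ)) ξ = _
  rw [Real.fourier_real_eq_integral_exp_smul]
  have hLHS : (∫ x : ℝ, Complex.exp (↑(-2 * π * x * ξ) * Complex.I) •
        (((1 + x ^ 2) ^ (-(α + 2) / 2) : ℝ) : ℂ))
      = ((Real.Gamma s : ℂ))⁻¹ * ∫ x : ℝ, ∫ t in Set.Ioi (0:ℝ), G x t := by
    rw [← MeasureTheory.integral_const_mul]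
    congr 1
    funext x
    have hpull : (∫ t in Set.Ioi (0:ℝ), G x t)
        = Complex.exp (↑(-2 * π * x * ξ) * Complex.I) *
          ((∫ t in Set.Ioi (0:ℝ), t ^ (s - 1) * Real.exp (-((1 + x ^ 2) * t)) : ℝ) : ℂ) := by
      simp only [hG_def]
      rw [MeasureTheory.integral_const_mul]
      congr 1
      exact integral_ofReal
    rw [hpull, key x, smul_eq_mul]
    push_cast
    ring
  rw [hLHS, MeasureTheory.integral_integral_swap hG]
  -- compute inner integral for each t > 0
  have hinner : ∀ t ∈ Set.Ioi (0:ℝ), (∫ x : ℝ, G x t)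
      = ((Real.sqrt π * (Real.exp (-t) * t ^ ((α - 1) / 2) *
          Real.exp (-(π ^ 2 * ξ ^ 2) / t)) : ℝ) : ℂ) := by
    intro t ht
    have ht' : (0:ℝ) < t := ht
    have htre : (0:ℝ) < ((t : ℂ)).re := by simpa using ht'
    have hgauss := fourierIntegral_gaussian htre ((-2 * π * ξ : ℝ) : ℂ)
    have hGeq : (fun x : ℝ => G x t) = fun x : ℝ =>
        ((t ^ (s - 1) * Real.exp (-t) : ℝ) : ℂ) *
        (Complex.exp (Complex.I * ((-2 * π * ξ : ℝ) : ℂ) * x) *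
          Complex.exp (-(t : ℂ) * x ^ 2)) := by
      funext x
      have hsplit : Real.exp (-((1 + x ^ 2) * t)) = Real.exp (-t) * Real.exp (-(t * x ^ 2)) := by
        rw [← Real.exp_add]; ring_nf
      have e1 : ((-2 * π * x * ξ : ℝ) : ℂ) * Complex.I
          = Complex.I * ((-2 * π * ξ : ℝ) : ℂ) * (x : ℂ) := by push_cast; ring
      have e2 : ((Real.exp (-(t * x ^ 2)) : ℝ) : ℂ) = Complex.exp (-(t : ℂ) * (x : ℂ) ^ 2) := by
        rw [Complex.ofReal_exp]; congr 1; push_cast; ring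
      simp only [hG_def]
      rw [hsplit]
      push_cast [Complex.ofReal_exp]
      ring_nf
    rw [hGeq, MeasureTheory.integral_const_mul, hgauss]
    -- now a computation
    have hdiv : (0:ℝ) ≤ π / t := by positivity
    have h1 : ((π : ℂ) / t) ^ (1 / 2 : ℂ) = (((π / t) ^ (1/2 : ℝ) : ℝ) : ℂ) := by
      rw [Complex.ofReal_cpow hdiv]
      push_cast
      ring_nf
    have h2 : Complex.exp (-((-2 * π * ξ : ℝ) : ℂ) ^ 2 / (4 * (t:ℂ)))
        = ((Real.exp (-(π ^ 2 * ξ ^ 2) / t) : ℝ) : ℂ) := by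
      rw [Complex.ofReal_exp]
      congr 1
      push_cast
      field_simp
      ring
    rw [h1, h2]
    congr 1
    have hπt : (π / t) ^ (1/2 : ℝ) = Real.sqrt π / t ^ (1/2 : ℝ) := by
      rw [Real.div_rpow Real.pi_pos.le ht'.le, Real.sqrt_eq_rpow]
    have hts : t ^ (s - 1) / t ^ (1/2 : ℝ) = t ^ ((α - 1) / 2) := by
      rw [← Real.rpow_sub ht']
      congr 1
      rw [hs_def]; ring
    have h3 : t ^ ((1:ℝ)/2) ≠ 0 := by positivity
    rw [hπt, ← hts]
    field_simp
    push_cast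
    ring
  rw [setIntegral_congr_fun measurableSet_Ioi hinner]
  -- final bookkeeping
  have hcast : (∫ t in Set.Ioi (0:ℝ), ((Real.sqrt π * (Real.exp (-t) * t ^ ((α - 1) / 2) *
          Real.exp (-(π ^ 2 * ξ ^ 2) / t)) : ℝ) : ℂ))
      = ((∫ t in Set.Ioi (0:ℝ), Real.sqrt π * (Real.exp (-t) * t ^ ((α - 1) / 2) *
          Real.exp (-(π ^ 2 * ξ ^ 2) / t)) : ℝ) : ℂ) := integral_ofReal
  rw [hcast, MeasureTheory.integral_const_mul]
  push_cast
  rw [div_eq_mul_inv]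
  ring
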